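/- For the star-background network with M ≥ 3 nodes, let κ be the next generation matrix, κ_{ik} = (1/γ)·Σ_{j=1}^{M} β_j φ_{ij} φ_{kj}. Assume 0 < β0 < γ (so R0 = β0/γ < 1) and γ/β0 < ζ < ζcrit. If |φ0 − 1/M| < φ̃, then every eigenvalue of κ has absolute value strictly less than 1; if |φ0 − 1/M| > φ̃ (with φ0 still in (0, 1/(M−1)]), then κ has a real eigenvalue strictly greater than 1. -/

import Mathlib

open Matrix

/-- Flux matrix of the star-background network with `M` nodes: every outer
node is joined to the center (index `M−1`) with flux `φ0`, any two distinct
outer nodes are joined with flux `φ1`, `φ_{ii} = 1 − φ0 − (M−2)φ1` for outer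
`i`, and `φ_{MM} = 1 − (M−1)φ0`. -/
noncomputable def sbFlux (M : ℕ) (φ0 φ1 : ℝ) : Matrix (Fin M) (Fin M) ℝ :=
  Matrix.of fun i k =>
    if i = k then
      (if (i : ℕ) = M - 1 then 1 - ((M : ℝ) - 1) * φ0
       else 1 - φ0 - ((M : ℝ) - 2) * φ1)
    else if (i : ℕ) = M - 1 ∨ (k : ℕ) = M - 1 then φ0 else φ1

/-- Infection rates: `β_i = β0` for outer nodes, `β_M = ζ·β0` at the center. -/
noncomputable def starBeta (M : ℕ) (β0 ζ : ℝ) : Fin M → ℝ :=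
  fun i => if (i : ℕ) = M - 1 then ζ * β0 else β0

/-- Next generation matrix `κ_{ik} = (1/γ)·Σ_j β_j φ_{ij} φ_{kj}`. -/
noncomputable def ngm (M : ℕ) (β : Fin M → ℝ) (γ : ℝ)
    (φ : Matrix (Fin M) (Fin M) ℝ) : Matrix (Fin M) (Fin M) ℝ :=
  Matrix.of fun i k => (1 / γ) * ∑ j, β j * φ i j * φ k j

open Finset
lemma sum_ite_one {α : Type*} [DecidableEq α] (t : Finset α) (k : α) (hk : k ∈ t)
    (A B : ℝ) : ∑ j ∈ t, (if j = k then A else B) = (t.card : ℝ) * B + (A - B) := by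
  have : ∀ j ∈ t, (if j = k then A else B) = B + (if j = k then A - B else 0) := by
    intro j _; by_cases h : j = k <;> simp [h]
  rw [Finset.sum_congr rfl this, Finset.sum_add_distrib, Finset.sum_const,
    Finset.sum_ite_eq' t k (fun _ => A - B), if_pos hk]
  push_cast; ring

lemma sum_ite_two {α : Type*} [DecidableEq α] (t : Finset α) (i k : α) (hi : i ∈ t)
    (hk : k ∈ t) (hik : i ≠ k) (A B C : ℝ) :
    ∑ j ∈ t, (if j = i then A else if j = k then B else C)
      = (t.card : ℝ) * C + (A - C) + (B - C) := by
  have : ∀ j ∈ t, (if j = i then A else if j = k then B else C)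
      = C + ((if j = i then A - C else 0) + (if j = k then B - C else 0)) := by
    intro j _
    by_cases h : j = i
    · subst h; simp [hik]
    · by_cases h' : j = k
      · subst h'; simp [Ne.symm hik]
      · simp [h, h']
  rw [Finset.sum_congr rfl this, Finset.sum_add_distrib, Finset.sum_const,
    Finset.sum_add_distrib, Finset.sum_ite_eq' t i (fun _ => A - C),
    Finset.sum_ite_eq' t k (fun _ => B - C), if_pos hi, if_pos hk]
  ring

lemma ngm_entry (M : ℕ) (hM : 3 ≤ M) (β0 γ ζ s b : ℝ) (i k : Fin M) :
    ngm M (starBeta M β0 ζ) γ (sbFlux M s b) i k =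
      (1/γ) * (if (i : ℕ) = M - 1 then
          (if (k : ℕ) = M - 1 then β0 * (((M:ℝ)-1) * s^2) + ζ*β0 * (1-((M:ℝ)-1)*s)^2
           else β0 * (s * (1 - s)) + ζ*β0 * (s * (1-((M:ℝ)-1)*s)))
        else if (k : ℕ) = M - 1 then β0 * (s * (1 - s)) + ζ*β0 * (s*(1-((M:ℝ)-1)*s))
        else if i = k then β0 * ((1-s-((M:ℝ)-2)*b)^2 + ((M:ℝ)-2)*b^2) + ζ*β0*s^2
        else β0 * (2*(1-s-((M:ℝ)-2)*b)*b + ((M:ℝ)-3)*b^2) + ζ*β0*s^2) := by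
  have hM0 : 0 < M := by omega
  set c : Fin M := ⟨M-1, by omega⟩ with hcdef
  have hcnat : (c : ℕ) = M - 1 := rfl
  have hceq : ∀ j : Fin M, ((j:ℕ) = M - 1) ↔ j = c := fun j =>
    ⟨fun h => Fin.ext h, fun h => by subst h; rfl⟩
  have hcard : (((univ : Finset (Fin M)).erase c).card : ℝ) = (M:ℝ) - 1 := by
    rw [Finset.card_erase_of_mem (mem_univ c), Finset.card_univ, Fintype.card_fin]
    have : (1:ℕ) ≤ M := by omega
    push_cast [Nat.cast_sub this]; ring
  set a : ℝ := 1 - s - ((M:ℝ)-2)*b with ha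
  set d : ℝ := 1 - ((M:ℝ)-1)*s with hd
  have key : ∀ x y : Fin M, x ≠ c → y ≠ c →
      sbFlux M s b x y = if x = y then a else b := by
    intro x y hx hy
    have hx1 : ¬((x:ℕ) = M - 1) := fun h => hx ((hceq x).mp h)
    have hy1 : ¬((y:ℕ) = M - 1) := fun h => hy ((hceq y).mp h)
    simp [sbFlux, hx1, hy1, ha]
  have keyc : ∀ y : Fin M, y ≠ c → sbFlux M s b c y = s := by
    intro y hy
    have : ¬(c = y) := fun h => hy h.symm
    simp [sbFlux, this, hcnat]
  have keyc' : ∀ x : Fin M, x ≠ c → sbFlux M s b x c = s := by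
    intro x hx
    simp [sbFlux, hx, hcnat]
  have keycc : sbFlux M s b c c = d := by simp [sbFlux, hcnat, hd]
  have hbeta : ∀ y : Fin M, y ≠ c → starBeta M β0 ζ y = β0 := by
    intro y hy
    have hy1 : ¬((y:ℕ) = M - 1) := fun h => hy ((hceq y).mp h)
    simp [starBeta, hy1]
  have hbetac : starBeta M β0 ζ c = ζ * β0 := by simp [starBeta, hcnat]
  show (1/γ) * ∑ j, starBeta M β0 ζ j * sbFlux M s b i j * sbFlux M s b k j = _
  rw [← Finset.sum_erase_add _ _ (mem_univ c)]
  by_cases hi : i = c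
  · subst hi
    rw [if_pos hcnat]
    by_cases hk : k = c
    · subst hk
      rw [if_pos hcnat]
      have : ∀ j ∈ (univ : Finset (Fin M)).erase c,
          starBeta M β0 ζ j * sbFlux M s b c j * sbFlux M s b c j = β0 * s * s := by
        intro j hj
        have hjc := Finset.ne_of_mem_erase hj
        rw [hbeta j hjc, keyc j hjc]
      rw [Finset.sum_congr rfl this, Finset.sum_const, hbetac, keycc]
      have := hcard
      rw [nsmul_eq_mul, this]
      ring
    · rw [if_neg (fun h => hk ((hceq k).mp h))]
      have hkm : k ∈ (univ : Finset (Fin M)).erase c := Finset.mem_erase.mpr ⟨hk, mem_univ k⟩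
      have : ∀ j ∈ (univ : Finset (Fin M)).erase c,
          starBeta M β0 ζ j * sbFlux M s b c j * sbFlux M s b k j
            = (if j = k then β0 * s * a else β0 * s * b) := by
        intro j hj
        have hjc := Finset.ne_of_mem_erase hj
        rw [hbeta j hjc, keyc j hjc, key k j hk hjc]
        by_cases h : j = k
        · subst h; simp
        · rw [if_neg (fun h' => h h'.symm), if_neg h]
      rw [Finset.sum_congr rfl this, sum_ite_one _ k hkm, hcard, hbetac, keycc, keyc' k hk]
      ring
  · rw [if_neg (fun h => hi ((hceq i).mp h))]
    have him : i ∈ (univ : Finset (Fin M)).erase c := Finset.mem_erase.mpr ⟨hi, mem_univ i⟩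
    by_cases hk : k = c
    · subst hk
      rw [if_pos hcnat]
      have : ∀ j ∈ (univ : Finset (Fin M)).erase c,
          starBeta M β0 ζ j * sbFlux M s b i j * sbFlux M s b c j
            = (if j = i then β0 * a * s else β0 * b * s) := by
        intro j hj
        have hjc := Finset.ne_of_mem_erase hj
        rw [hbeta j hjc, keyc j hjc, key i j hi hjc]
        by_cases h : j = i
        · subst h; simp
        · rw [if_neg (fun h' => h h'.symm), if_neg h]
      rw [Finset.sum_congr rfl this, sum_ite_one _ i him, hcard, hbetac, keycc, keyc' i hi]
      ring
    · rw [if_neg (fun h => hk ((hceq k).mp h))]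
      have hkm : k ∈ (univ : Finset (Fin M)).erase c := Finset.mem_erase.mpr ⟨hk, mem_univ k⟩
      by_cases hik : i = k
      · subst hik
        rw [if_pos rfl]
        have : ∀ j ∈ (univ : Finset (Fin M)).erase c,
            starBeta M β0 ζ j * sbFlux M s b i j * sbFlux M s b i j
              = (if j = i then β0 * a * a else β0 * b * b) := by
          intro j hj
          have hjc := Finset.ne_of_mem_erase hj
          rw [hbeta j hjc, key i j hi hjc]
          by_cases h : j = i
          · subst h; simp
          · rw [if_neg (fun h' => h h'.symm), if_neg h]
        rw [Finset.sum_congr rfl this, sum_ite_one _ i him, hcard, hbetac,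
          keyc' i hi]
        ring
      · rw [if_neg hik]
        have : ∀ j ∈ (univ : Finset (Fin M)).erase c,
            starBeta M β0 ζ j * sbFlux M s b i j * sbFlux M s b k j
              = (if j = i then β0 * a * b else if j = k then β0 * b * a else β0 * b * b) := by
          intro j hj
          have hjc := Finset.ne_of_mem_erase hj
          rw [hbeta j hjc, key i j hi hjc, key k j hk hjc]
          by_cases h : j = i
          · subst h
            rw [if_pos rfl, if_pos rfl, if_neg (fun h' => hik h'.symm)]
          · by_cases h' : j = k
            · subst h'
              rw [if_neg (fun h'' => h h''.symm), if_neg h, if_pos rfl, if_pos rfl]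
            · rw [if_neg (fun h'' => h h''.symm), if_neg (fun h'' => h' h''.symm),
                if_neg h, if_neg h']
        rw [Finset.sum_congr rfl this, sum_ite_two _ i k him hkm hik, hcard,
          hbetac, keyc' i hi, keyc' k hk]
        ring

noncomputable def sbP (M : ℕ) (β0 γ ζ s b : ℝ) : ℝ :=
  (1/γ) * (β0 * ((1-s-((M:ℝ)-2)*b)^2 + ((M:ℝ)-2)*b^2) + ζ*β0*s^2)
noncomputable def sbQ (M : ℕ) (β0 γ ζ s b : ℝ) : ℝ :=
  (1/γ) * (β0 * (2*(1-s-((M:ℝ)-2)*b)*b + ((M:ℝ)-3)*b^2) + ζ*β0*s^2)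
noncomputable def sbE (M : ℕ) (β0 γ ζ s : ℝ) : ℝ :=
  (1/γ) * (β0 * (s * (1 - s)) + ζ*β0 * (s*(1-((M:ℝ)-1)*s)))
noncomputable def sbW (M : ℕ) (β0 γ ζ s : ℝ) : ℝ :=
  (1/γ) * (β0 * (((M:ℝ)-1) * s^2) + ζ*β0 * (1-((M:ℝ)-1)*s)^2)


lemma ngm_entry' (M : ℕ) (hM : 3 ≤ M) (β0 γ ζ s b : ℝ) (i k : Fin M) :
    ngm M (starBeta M β0 ζ) γ (sbFlux M s b) i k =
      (if (i : ℕ) = M - 1 then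
          (if (k : ℕ) = M - 1 then sbW M β0 γ ζ s else sbE M β0 γ ζ s)
        else if (k : ℕ) = M - 1 then sbE M β0 γ ζ s
        else if i = k then sbP M β0 γ ζ s b else sbQ M β0 γ ζ s b) := by
  rw [ngm_entry M hM β0 γ ζ s b i k]
  unfold sbW sbE sbP sbQ
  by_cases h1 : (i:ℕ) = M - 1 <;> by_cases h2 : (k:ℕ) = M - 1 <;>
    simp [h1, h2, mul_ite]

lemma ngm_mulVec (M : ℕ) (hM : 3 ≤ M) (β0 γ ζ s b : ℝ) (v : Fin M → ℝ)
    (c : Fin M) (hc : (c : ℕ) = M - 1) (i : Fin M) :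
    ((ngm M (starBeta M β0 ζ) γ (sbFlux M s b)).mulVec v) i =
      (if i = c then
        sbE M β0 γ ζ s * ((∑ j, v j) - v c) + sbW M β0 γ ζ s * v c
      else
        sbQ M β0 γ ζ s b * ((∑ j, v j) - v c) +
          (sbP M β0 γ ζ s b - sbQ M β0 γ ζ s b) * v i + sbE M β0 γ ζ s * v c) := by
  have hceq : ∀ j : Fin M, ((j:ℕ) = M - 1) ↔ j = c := fun j =>
    ⟨fun h => Fin.ext (h.trans hc.symm), fun h => by subst h; exact hc⟩
  have hS : ∑ k ∈ (univ : Finset (Fin M)).erase c, v k = (∑ j, v j) - v c := by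
    rw [eq_sub_iff_add_eq, Finset.sum_erase_add _ _ (mem_univ c)]
  rw [Matrix.mulVec, dotProduct]
  simp only [ngm_entry' M hM β0 γ ζ s b i]
  rw [← Finset.sum_erase_add _ _ (mem_univ c)]
  by_cases hi : i = c
  · have hi1 : (i:ℕ) = M - 1 := (hceq i).mpr hi
    rw [if_pos hi]
    simp only [if_pos hi1, if_pos ((hceq c).mpr rfl)]
    have : ∀ k ∈ (univ : Finset (Fin M)).erase c,
        (if (k:ℕ) = M - 1 then sbW M β0 γ ζ s else sbE M β0 γ ζ s) * v k
          = sbE M β0 γ ζ s * v k := by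
      intro k hk
      rw [if_neg (fun h => (Finset.ne_of_mem_erase hk) ((hceq k).mp h))]
    rw [Finset.sum_congr rfl this, ← Finset.mul_sum, hS, if_pos hi]
  · have hi1 : ¬((i:ℕ) = M - 1) := fun h => hi ((hceq i).mp h)
    rw [if_neg hi]
    simp only [if_neg hi1, if_pos ((hceq c).mpr rfl)]
    have him : i ∈ (univ : Finset (Fin M)).erase c := Finset.mem_erase.mpr ⟨hi, mem_univ i⟩
    have : ∀ k ∈ (univ : Finset (Fin M)).erase c,
        (if (k:ℕ) = M - 1 then sbE M β0 γ ζ s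
          else if i = k then sbP M β0 γ ζ s b else sbQ M β0 γ ζ s b) * v k
          = sbQ M β0 γ ζ s b * v k
            + (if k = i then (sbP M β0 γ ζ s b - sbQ M β0 γ ζ s b) * v k else 0) := by
      intro k hk
      rw [if_neg (fun h => (Finset.ne_of_mem_erase hk) ((hceq k).mp h))]
      by_cases h : i = k
      · subst h; rw [if_pos rfl, if_pos rfl]; ring
      · rw [if_neg h, if_neg (fun h' => h h'.symm)]; ring
    rw [Finset.sum_congr rfl this, Finset.sum_add_distrib, ← Finset.mul_sum, hS,
      Finset.sum_ite_eq' _ i (fun k => (sbP M β0 γ ζ s b - sbQ M β0 γ ζ s b) * v k),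
      if_pos him, if_neg hi]
lemma quad_bound {μ T Δ : ℝ} (hch : μ^2 - T*μ + Δ = 0) (hT : 0 ≤ T)
    (hΔ0 : 0 ≤ Δ) (hΔ1 : Δ < 1) (hp : 0 < 1 - T + Δ) : |μ| < 1 := by
  have hμ0 : 0 ≤ μ := by nlinarith [sq_nonneg μ]
  rw [abs_of_nonneg hμ0]
  by_contra hcon
  push_neg at hcon
  have key : 0 < (1 - μ)*(1 + μ - T) := by nlinarith
  have h2 : 1 + μ - T < 0 := by
    by_contra h3
    push_neg at h3
    nlinarith [mul_nonneg (sub_nonneg.2 hcon) h3]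
  have h3 : 1 < μ := by nlinarith
  nlinarith [mul_pos (by linarith : (0:ℝ) < μ - 1) (by linarith : (0:ℝ) < T - μ - 1)]

lemma aux_pos_of_mul_pos {a b : ℝ} (ha : 0 < a) (hab : 0 < a*b) : 0 < b := by
  nlinarith
lemma aux_neg_of_mul_neg {a b : ℝ} (ha : 0 < a) (hab : a*b < 0) : b < 0 := by
  nlinarith
lemma aux_lt_one_of_mul {d a : ℝ} (h : d*a < a) (ha : 0 < a) : d < 1 := by
  nlinarith
lemma aux_sq_lt_one {X : ℝ} (h1 : -1 < X) (h2 : X < 1) : X^2 < 1 := by nlinarith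
lemma aux_r_sq_lt_one {r X : ℝ} (hr0 : 0 ≤ r) (hr1 : r < 1) (hX : X^2 < 1) :
    r*X^2 < 1 := by nlinarith [sq_nonneg X]
lemma aux_disc {T Δ : ℝ} (h : 1 - T + Δ < 0) : (T-2)^2 < T^2 - 4*Δ := by nlinarith

set_option maxHeartbeats 1000000 in
theorem starBackground_ngm_DFE (M : ℕ) (hM : 3 ≤ M) (β0 γ ζ φ0 φ1 : ℝ)
    (hβ0 : 0 < β0) (hβγ : β0 < γ)
    (hφ1 : 0 < φ1) (hφsum : φ0 + ((M : ℝ) - 2) * φ1 < 1)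
    (hφlo : 0 < φ0) (hφhi : φ0 ≤ 1 / ((M : ℝ) - 1))
    (hζlo : γ / β0 < ζ)
    (hζhi : ζ < 1 + (M : ℝ) * (1 - β0 / γ) / (β0 / γ)) :
    (|φ0 - 1 / (M : ℝ)| <
        (1 / (M : ℝ)) * Real.sqrt
          (((M : ℝ) * (1 - β0 / γ) - (β0 / γ) * (ζ - 1)) /
            ((β0 / γ) * ((M : ℝ) * ζ * (1 - β0 / γ) - (ζ - 1)))) →
      ∀ μ ∈ spectrum ℝ (ngm M (starBeta M β0 ζ) γ (sbFlux M φ0 φ1)),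
        |μ| < 1) ∧
    ((1 / (M : ℝ)) * Real.sqrt
          (((M : ℝ) * (1 - β0 / γ) - (β0 / γ) * (ζ - 1)) /
            ((β0 / γ) * ((M : ℝ) * ζ * (1 - β0 / γ) - (ζ - 1))))
        < |φ0 - 1 / (M : ℝ)| →
      ∃ μ ∈ spectrum ℝ (ngm M (starBeta M β0 ζ) γ (sbFlux M φ0 φ1)),
        1 < μ) := by
  have hγ0 : 0 < γ := hβ0.trans hβγ
  have hMR : (3:ℝ) ≤ (M:ℝ) := by exact_mod_cast hM
  have hM0 : (0:ℝ) < (M:ℝ) := by linarith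
  set r : ℝ := β0 / γ with hrdef
  have hr0 : 0 < r := div_pos hβ0 hγ0
  have hr1 : r < 1 := (div_lt_one hγ0).2 hβγ
  have hζ1 : 1 < ζ := lt_trans ((one_lt_div hβ0).2 hβγ) hζlo
  have hζ0 : 0 < ζ := by linarith
  have hrζ : 1 < ζ * r := by
    have h1 : γ < ζ * β0 := by
      have := (div_lt_iff₀ hβ0).1 hζlo
      linarith
    rw [hrdef, show ζ * (β0 / γ) = (ζ * β0) / γ by ring]
    exact (one_lt_div hγ0).2 h1
  set A0v : ℝ := (M:ℝ)*(1-r) - r*(ζ-1) with hA0vdef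
  set A2v : ℝ := (M:ℝ)*ζ*(1-r) - (ζ-1) with hA2vdef
  have hA0 : 0 < A0v := by
    have h1 : ζ - 1 < (M:ℝ)*(1-r)/r := by linarith
    have h2 : (ζ-1)*r < ((M:ℝ)*(1-r)/r)*r := mul_lt_mul_of_pos_right h1 hr0
    have h3 : ((M:ℝ)*(1-r)/r)*r = (M:ℝ)*(1-r) := by field_simp
    rw [hA0vdef]; nlinarith
  have hA2 : 0 < A2v := by
    have hid : r*A2v = (M:ℝ)*(1-r)*(ζ*r-1) + A0v := by rw [hA2vdef, hA0vdef]; ring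
    have h1 : 0 < (M:ℝ)*(1-r)*(ζ*r-1) :=
      mul_pos (mul_pos hM0 (by linarith)) (by linarith)
    have h2 : 0 < r*A2v := by rw [hid]; linarith
    by_contra hcc
    push_neg at hcc
    nlinarith [mul_nonneg hr0.le (neg_nonneg.2 hcc)]
  have hle1 : ζ*r*A0v < A2v := by
    have hid : A2v - ζ*r*A0v = ζ*(1-r)*A0v + (ζ-1)*(ζ*r-1) := by
      rw [hA2vdef, hA0vdef]; ring
    have h1 : 0 < ζ*(1-r)*A0v := mul_pos (mul_pos hζ0 (by linarith)) hA0
    have h2 : 0 < (ζ-1)*(ζ*r-1) := mul_pos (by linarith) (by linarith)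
    linarith
  -- geometric facts
  have hM1 : (0:ℝ) < (M:ℝ) - 1 := by linarith
  have hd0 : 0 ≤ 1 - ((M:ℝ)-1)*φ0 := by
    have := (le_div_iff₀ hM1).1 hφhi
    linarith
  have hs1 : φ0 < 1 := by
    nlinarith [mul_nonneg (by linarith : (0:ℝ) ≤ (M:ℝ)-3) hφlo.le]
  -- abbreviations
  set sP := sbP M β0 γ ζ φ0 φ1 with hsPdef
  set sQ := sbQ M β0 γ ζ φ0 φ1 with hsQdef
  set sE := sbE M β0 γ ζ φ0 with hsEdef
  set sW := sbW M β0 γ ζ φ0 with hsWdef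
  set B : ℝ := sP + ((M:ℝ)-2)*sQ with hBdef
  set T : ℝ := B + sW with hTdef
  set Δ : ℝ := B*sW - ((M:ℝ)-1)*sE^2 with hΔdef
  set u : ℝ := φ0 - 1/(M:ℝ) with hudef
  have hγne : γ ≠ 0 := ne_of_gt hγ0
  have hMne : (M:ℝ) ≠ 0 := ne_of_gt hM0
  have hI1 : (M:ℝ)*(1 - T + Δ) = A0v - (M:ℝ)^2*r*A2v*u^2 := by
    rw [hTdef, hΔdef, hBdef, hsPdef, hsQdef, hsEdef, hsWdef, hudef, hA0vdef, hA2vdef, hrdef]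
    unfold sbP sbQ sbE sbW
    field_simp
    ring
  have hI2 : Δ = ζ*r^2*(M:ℝ)^2*u^2 := by
    rw [hΔdef, hBdef, hsPdef, hsQdef, hsEdef, hsWdef, hudef, hrdef]
    unfold sbP sbQ sbE sbW
    field_simp
    ring
  have hBeq : B = r*((1-φ0)^2 + ((M:ℝ)-1)*ζ*φ0^2) := by
    rw [hBdef, hsPdef, hsQdef, hrdef]
    unfold sbP sbQ
    field_simp
    ring
  have hWeq : sW = r*(((M:ℝ)-1)*φ0^2 + ζ*(1-((M:ℝ)-1)*φ0)^2) := by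
    rw [hsWdef, hrdef]; unfold sbW; field_simp
  have hEeq : sE = r*(φ0*(1-φ0) + ζ*φ0*(1-((M:ℝ)-1)*φ0)) := by
    rw [hsEdef, hrdef]; unfold sbE; field_simp
  have hPQ : sP - sQ = r*(1 - φ0 - ((M:ℝ)-1)*φ1)^2 := by
    rw [hsPdef, hsQdef, hrdef]; unfold sbP sbQ; field_simp; ring
  have hT0 : 0 ≤ T := by
    have h1 : (0:ℝ) ≤ (1-φ0)^2 + ((M:ℝ)-1)*ζ*φ0^2 := by positivity
    have h2 : (0:ℝ) ≤ ((M:ℝ)-1)*φ0^2 + ζ*(1-((M:ℝ)-1)*φ0)^2 := by positivity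
    have h3 := mul_nonneg hr0.le h1
    have h4 := mul_nonneg hr0.le h2
    rw [hTdef, hBeq, hWeq]
    linarith
  have hΔ0 : 0 ≤ Δ := by rw [hI2]; positivity
  have hE0 : 0 < sE := by
    have hBnn : 0 ≤ ζ*φ0*(1-((M:ℝ)-1)*φ0) :=
      mul_nonneg (mul_nonneg hζ0.le hφlo.le) hd0
    have hApos : 0 < φ0*(1-φ0) := mul_pos hφlo (by linarith)
    rw [hEeq]
    exact mul_pos hr0 (by linarith)
  -- the threshold
  set φt : ℝ := (1 / (M : ℝ)) * Real.sqrt (A0v / (r * A2v)) with hφtdef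
  have hargnn : 0 ≤ A0v / (r * A2v) := le_of_lt (div_pos hA0 (mul_pos hr0 hA2))
  have hφt0 : 0 ≤ φt := by
    rw [hφtdef]
    positivity
  have hφt2 : φt^2 = A0v / ((M:ℝ)^2 * (r*A2v)) := by
    rw [hφtdef, mul_pow, Real.sq_sqrt hargnn, div_pow, one_pow, div_mul_div_comm, one_mul]
  set c : Fin M := ⟨M-1, by omega⟩ with hcdef
  have hc : (c : ℕ) = M - 1 := rfl
  have hi0c : (⟨0, by omega⟩ : Fin M) ≠ c := by
    intro h
    have : (0:ℕ) = M - 1 := congrArg (Fin.val) h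
    omega
  constructor
  · -- subcritical case
    intro h1 μ hμ
    have hu2 : u^2 < A0v / ((M:ℝ)^2 * (r*A2v)) := by
      have h2 := mul_self_lt_mul_self (abs_nonneg u) h1
      rw [abs_mul_abs_self] at h2
      calc u^2 = u*u := sq u
        _ < φt*φt := h2
        _ = φt^2 := (sq φt).symm
        _ = _ := hφt2
    have hden : 0 < (M:ℝ)^2 * (r*A2v) := by positivity
    have hu2' : u^2 * ((M:ℝ)^2 * (r*A2v)) < A0v := (lt_div_iff₀ hden).1 hu2
    have hpos : 0 < (M:ℝ)*(1 - T + Δ) := by rw [hI1]; linarith [hu2']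
    have hp1 : 0 < 1 - T + Δ := aux_pos_of_mul_pos hM0 hpos
    have hΔ1 : Δ < 1 := by
      have h4 : (ζ*r)*(u^2 * ((M:ℝ)^2 * (r*A2v))) < (ζ*r)*A0v :=
        mul_lt_mul_of_pos_left hu2' (by positivity)
      have h5 : Δ*A2v < A2v := by rw [hI2]; linarith [h4, hle1]
      exact aux_lt_one_of_mul h5 hA2
    -- extract an eigenvector
    rw [spectrum.mem_iff] at hμ
    have hdet : ((algebraMap ℝ (Matrix (Fin M) (Fin M) ℝ) μ)
        - ngm M (starBeta M β0 ζ) γ (sbFlux M φ0 φ1)).det = 0 := by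
      by_contra hd
      exact hμ ((Matrix.isUnit_iff_isUnit_det _).2 (isUnit_iff_ne_zero.2 hd))
    obtain ⟨v, hv0, hv⟩ := Matrix.exists_mulVec_eq_zero_iff.2 hdet
    rw [Algebra.algebraMap_eq_smul_one, Matrix.sub_mulVec, Matrix.smul_mulVec,
      Matrix.one_mulVec] at hv
    have heig : ∀ i, ((ngm M (starBeta M β0 ζ) γ (sbFlux M φ0 φ1)).mulVec v) i = μ * v i := by
      intro i
      have h := congrFun hv i
      simp only [Pi.sub_apply, Pi.smul_apply, Pi.zero_apply, smul_eq_mul] at h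
      linarith
    set S : ℝ := (∑ j, v j) - v c with hSdef
    have heqc : sE*S + sW*(v c) = μ * v c := by
      have h := heig c
      rw [ngm_mulVec M hM β0 γ ζ φ0 φ1 v c hc c, if_pos rfl] at h
      rw [← hsEdef, ← hsWdef, ← hSdef] at h
      exact h
    have heqi : ∀ i : Fin M, i ≠ c → sQ*S + (sP - sQ)*(v i) + sE*(v c) = μ * v i := by
      intro i hi
      have h := heig i
      rw [ngm_mulVec M hM β0 γ ζ φ0 φ1 v c hc i, if_neg hi] at h
      rw [← hsEdef, ← hsPdef, ← hsQdef, ← hSdef] at h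
      exact h
    have hSsum : ∑ i ∈ Finset.univ.erase c, v i = S := by
      rw [hSdef, eq_sub_iff_add_eq, Finset.sum_erase_add _ _ (Finset.mem_univ c)]
    have heqS : ((M:ℝ)-1)*(sQ*S + sE*(v c)) + (sP - sQ)*S = μ*S := by
      have h5 : ∑ i ∈ Finset.univ.erase c,
          ((sQ*S + sE*(v c)) + (sP - sQ)*(v i)) = ∑ i ∈ Finset.univ.erase c, μ * v i := by
        refine Finset.sum_congr rfl (fun i hi => ?_)
        have := heqi i (Finset.ne_of_mem_erase hi)
        linarith
      rw [Finset.sum_add_distrib, Finset.sum_const, ← Finset.mul_sum, ← Finset.mul_sum,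
        hSsum] at h5
      have hcard : (((Finset.univ : Finset (Fin M)).erase c).card : ℝ) = (M:ℝ) - 1 := by
        rw [Finset.card_erase_of_mem (Finset.mem_univ c), Finset.card_univ, Fintype.card_fin]
        have h6 : (1:ℕ) ≤ M := by omega
        push_cast [Nat.cast_sub h6]
        ring
      rw [nsmul_eq_mul, hcard] at h5
      linarith
    by_cases hz : S = 0 ∧ v c = 0
    · obtain ⟨i, hvi⟩ := Function.ne_iff.1 hv0
      have hic : i ≠ c := by
        intro h
        rw [h] at hvi
        exact hvi hz.2
      have h7 := heqi i hic
      rw [hz.1, hz.2] at h7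
      have h8 : (sP - sQ) = μ := by
        have h9 : (sP - sQ) * v i = μ * v i := by linarith
        exact mul_right_cancel₀ hvi h9
      rw [← h8, hPQ]
      set X : ℝ := 1 - φ0 - ((M:ℝ)-1)*φ1 with hXdef
      have hX1 : X < 1 := by
        have := mul_pos hM1 hφ1
        rw [hXdef]; linarith
      have hb1 : φ1 < 1 := by
        have h10 : 1*φ1 ≤ ((M:ℝ)-2)*φ1 :=
          mul_le_mul_of_nonneg_right (by linarith) hφ1.le
        linarith
      have hX2 : -1 < X := by rw [hXdef]; linarith
      have hXsq : X^2 < 1 := aux_sq_lt_one hX2 hX1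
      rw [abs_of_nonneg (by positivity)]
      exact aux_r_sq_lt_one hr0.le hr1 hXsq
    · -- characteristic equation
      have e1 : ((M:ℝ)-1)*(sQ*S + sE*(v c)) + (sP - sQ)*S - μ*S = 0 := by linarith
      have e2 : sE*S + sW*(v c) - μ * v c = 0 := by linarith
      have charS : (μ^2 - T*μ + Δ) * S = 0 := by
        rw [hTdef, hΔdef, hBdef]
        linear_combination (sW - μ) * e1 + (1 - (M:ℝ)) * sE * e2
      have charY : (μ^2 - T*μ + Δ) * (v c) = 0 := by
        rw [hTdef, hΔdef, hBdef]
        linear_combination (sP + ((M:ℝ)-2)*sQ - μ) * e2 - sE * e1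
      have hchar : μ^2 - T*μ + Δ = 0 := by
        rcases mul_eq_zero.1 charS with h | h
        · exact h
        · rcases mul_eq_zero.1 charY with h' | h'
          · exact h'
          · exact absurd ⟨h, h'⟩ hz
      exact quad_bound hchar hT0 hΔ0 hΔ1 hp1
  · -- supercritical case
    intro h2
    have hu2 : A0v / ((M:ℝ)^2 * (r*A2v)) < u^2 := by
      have h3 := mul_self_lt_mul_self hφt0 h2
      rw [abs_mul_abs_self] at h3
      calc A0v / ((M:ℝ)^2 * (r*A2v)) = φt^2 := hφt2.symm
        _ = φt*φt := sq φt
        _ < u*u := h3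
        _ = u^2 := (sq u).symm
    have hden : 0 < (M:ℝ)^2 * (r*A2v) := by positivity
    have hu2' : A0v < u^2 * ((M:ℝ)^2 * (r*A2v)) := (div_lt_iff₀ hden).1 hu2
    have hneg : (M:ℝ)*(1 - T + Δ) < 0 := by rw [hI1]; linarith [hu2']
    have hp1 : 1 - T + Δ < 0 := aux_neg_of_mul_neg hM0 hneg
    have hgt : (T-2)^2 < T^2 - 4*Δ := aux_disc hp1
    have hdisc0 : 0 ≤ T^2 - 4*Δ := le_of_lt (lt_of_le_of_lt (sq_nonneg (T-2)) hgt)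
    set δ : ℝ := Real.sqrt (T^2 - 4*Δ) with hδdef
    have hδ2 : δ^2 = T^2 - 4*Δ := Real.sq_sqrt hdisc0
    have hδgt : |T-2| < δ := by
      rw [hδdef, show |T-2| = Real.sqrt ((T-2)^2) by rw [Real.sqrt_sq_eq_abs]]
      exact Real.sqrt_lt_sqrt (sq_nonneg _) hgt
    set μ : ℝ := (T + δ)/2 with hμdef
    have hμ1 : 1 < μ := by
      have h4 : 2 - T ≤ |T-2| := by
        rw [abs_sub_comm]
        exact le_abs_self _
      rw [hμdef]
      linarith
    have hchar : μ^2 - T*μ + Δ = 0 := by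
      rw [hμdef]
      linear_combination (1/4) * hδ2
    refine ⟨μ, ?_, hμ1⟩
    -- build the eigenvector
    set v : Fin M → ℝ := fun i => if i = c then μ - B else sE with hvdef
    have hvS : (∑ j, v j) - v c = ((M:ℝ)-1)*sE := by
      rw [← Finset.sum_erase_add _ _ (Finset.mem_univ c)]
      have h5 : ∀ i ∈ Finset.univ.erase c, v i = sE := by
        intro i hi
        rw [hvdef]
        exact if_neg (Finset.ne_of_mem_erase hi)
      rw [Finset.sum_congr rfl h5, Finset.sum_const, nsmul_eq_mul]
      have hcard : (((Finset.univ : Finset (Fin M)).erase c).card : ℝ) = (M:ℝ) - 1 := by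
        rw [Finset.card_erase_of_mem (Finset.mem_univ c), Finset.card_univ, Fintype.card_fin]
        have h6 : (1:ℕ) ≤ M := by omega
        push_cast [Nat.cast_sub h6]
        ring
      rw [hcard]
      ring
    have hvc : v c = μ - B := by rw [hvdef]; exact if_pos rfl
    have heig : (ngm M (starBeta M β0 ζ) γ (sbFlux M φ0 φ1)).mulVec v = μ • v := by
      funext i
      rw [ngm_mulVec M hM β0 γ ζ φ0 φ1 v c hc i]
      rw [← hsEdef, ← hsPdef, ← hsQdef, ← hsWdef, hvS, hvc]
      rw [Pi.smul_apply, smul_eq_mul]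
      by_cases hi : i = c
      · rw [if_pos hi, hi, hvc]
        rw [hTdef, hΔdef, hBdef] at hchar
        linear_combination -hchar
      · rw [if_neg hi]
        have h6 : v i = sE := by rw [hvdef]; exact if_neg hi
        rw [h6, hBdef]
        ring
    rw [spectrum.mem_iff]
    intro hU
    rw [Matrix.isUnit_iff_isUnit_det, isUnit_iff_ne_zero] at hU
    apply hU
    apply Matrix.exists_mulVec_eq_zero_iff.1
    refine ⟨v, ?_, ?_⟩
    · intro h0
      have h7 := congrFun h0 (⟨0, by omega⟩ : Fin M)
      rw [hvdef] at h7
      simp only [if_neg hi0c, Pi.zero_apply] at h7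
      exact absurd h7 (ne_of_gt hE0)
    · rw [Algebra.algebraMap_eq_smul_one, Matrix.sub_mulVec, Matrix.smul_mulVec,
        Matrix.one_mulVec, heig, sub_self]
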